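/- Consider the sequential CAVI system on [0,1]²: ζ_{k+1} = f_β(ξ_k), ξ_{k+1} = f_β(ζ_{k+1}), with f_β(x) = 1/(1 + exp(−2β(2x−1))). If |β| < 1, then for every initialization (ζ₀, ξ₀) ∈ [0,1]² the iterates (ζ_k, ξ_k) converge to (1/2, 1/2). -/

import Mathlib

noncomputable def f (β x : ℝ) : ℝ := 1 / (1 + Real.exp (-2*β*(2*x-1)))

lemma sinh_le_mul_cosh {u : ℝ} (hu : 0 ≤ u) : Real.sinh u ≤ u * Real.cosh u := by
  set g : ℝ → ℝ := fun x => x * Real.cosh x - Real.sinh x with hg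
  have hd : ∀ x : ℝ, HasDerivAt g (x * Real.sinh x) x := by
    intro x
    have h1 := ((hasDerivAt_id x).mul (Real.hasDerivAt_cosh x)).sub (Real.hasDerivAt_sinh x)
    exact h1.congr_deriv (by simp only [id_eq]; ring)
  have hmono : MonotoneOn g (Set.Ici 0) := by
    apply monotoneOn_of_deriv_nonneg (convex_Ici 0)
    · exact fun x _ => ((hd x).continuousAt).continuousWithinAt
    · intro x hx
      exact ((hd x).differentiableAt).differentiableWithinAt
    · intro x hx
      rw [interior_Ici] at hx
      rw [(hd x).deriv]
      have : 0 ≤ Real.sinh x := Real.sinh_nonneg_iff.mpr (le_of_lt hx)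
      exact mul_nonneg (le_of_lt hx) this
  have h0 : g 0 = 0 := by simp [hg]
  have := hmono (Set.self_mem_Ici) (Set.mem_Ici.mpr hu) hu
  rw [h0] at this
  simpa [hg] using this

lemma expineq {t : ℝ} (ht : 0 ≤ t) : 1 - Real.exp (-t) ≤ t/2 * (1 + Real.exp (-t)) := by
  have hA := sinh_le_mul_cosh (by linarith : (0:ℝ) ≤ t/2)
  rw [Real.sinh_eq, Real.cosh_eq] at hA
  have h1 : Real.exp (t/2) * Real.exp (-(t/2)) = 1 := by
    rw [← Real.exp_add]; simp
  have h2 : Real.exp (-(t/2)) * Real.exp (-(t/2)) = Real.exp (-t) := by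
    rw [← Real.exp_add]; ring_nf
  have h3 : 0 < Real.exp (-(t/2)) := Real.exp_pos _
  nlinarith [hA, h3, h1, h2]

lemma key (β x : ℝ) : |f β x - 1/2| ≤ |β| * |x - 1/2| := by
  set t := 2*β*(2*x-1) with ht
  have hpos : 0 < 1 + Real.exp (-t) := by positivity
  have heq : f β x - 1/2 = (1 - Real.exp (-t)) / (2*(1 + Real.exp (-t))) := by
    have hneg : -2*β*(2*x-1) = -t := by rw [ht]; ring
    unfold f
    rw [hneg]
    field_simp
    ring
  have habs : |β| * |x - 1/2| = |t| / 4 := by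
    have : t = 4 * (β * (x - 1/2)) := by rw [ht]; ring
    rw [this, abs_mul, abs_mul, abs_of_nonneg (by norm_num : (0:ℝ) ≤ 4)]
    ring
  rw [heq, habs, abs_div, abs_of_pos (show (0:ℝ) < 2*(1+Real.exp (-t)) by positivity)]
  rw [div_le_div_iff₀ (by positivity) (by norm_num)]
  rcases le_total 0 t with h | h
  · have he : Real.exp (-t) ≤ 1 := Real.exp_le_one_iff.mpr (by linarith)
    rw [abs_of_nonneg (by linarith), abs_of_nonneg h]
    nlinarith [expineq h]
  · have he : 1 ≤ Real.exp (-t) := Real.one_le_exp_iff.mpr (by linarith)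
    rw [abs_of_nonpos (by linarith), abs_of_nonpos h]
    have hB := expineq (by linarith : (0:ℝ) ≤ -t)
    have h1 : Real.exp t * Real.exp (-t) = 1 := by rw [← Real.exp_add]; simp
    have h3 : 0 < Real.exp (-t) := Real.exp_pos _
    rw [neg_neg] at hB
    nlinarith [hB, h1, h3]

theorem stmt15 (β : ℝ) (hβ : |β| < 1) (ζ ξ : ℕ → ℝ)
    (h0 : ζ 0 ∈ Set.Icc (0:ℝ) 1) (h0' : ξ 0 ∈ Set.Icc (0:ℝ) 1)
    (hζ : ∀ k, ζ (k+1) = f β (ξ k)) (hξ : ∀ k, ξ (k+1) = f β (ζ (k+1))) :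
    Filter.Tendsto ζ Filter.atTop (nhds (1/2)) ∧
    Filter.Tendsto ξ Filter.atTop (nhds (1/2)) := by
  have hb0 : (0:ℝ) ≤ |β| := abs_nonneg β
  have hC : ∀ k, |ξ k - 1/2| ≤ (|β|^2)^k * |ξ 0 - 1/2| := by
    intro k
    induction k with
    | zero => simp
    | succ n ih =>
      have e1 : ξ (n+1) = f β (f β (ξ n)) := by rw [hξ n, hζ n]
      calc |ξ (n+1) - 1/2| = |f β (f β (ξ n)) - 1/2| := by rw [e1]
        _ ≤ |β| * |f β (ξ n) - 1/2| := key β _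
        _ ≤ |β| * (|β| * |ξ n - 1/2|) :=
            mul_le_mul_of_nonneg_left (key β _) hb0
        _ ≤ |β| * (|β| * ((|β|^2)^n * |ξ 0 - 1/2|)) := by
            have := mul_le_mul_of_nonneg_left ih hb0
            exact mul_le_mul_of_nonneg_left this hb0
        _ = (|β|^2)^(n+1) * |ξ 0 - 1/2| := by ring
  have hsq : |β|^2 < 1 := by nlinarith
  have hgeo : Filter.Tendsto (fun k => (|β|^2)^k * |ξ 0 - 1/2|) Filter.atTop (nhds 0) := by
    have h1 : Filter.Tendsto (fun k : ℕ => (|β|^2)^k) Filter.atTop (nhds 0) :=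
      tendsto_pow_atTop_nhds_zero_of_lt_one (by positivity) hsq
    simpa using h1.mul_const (|ξ 0 - 1/2|)
  have hxi0 : Filter.Tendsto (fun k => ξ k - 1/2) Filter.atTop (nhds 0) :=
    squeeze_zero_norm (fun k => by simpa using hC k) hgeo
  have hxi : Filter.Tendsto ξ Filter.atTop (nhds (1/2)) := by
    have := hxi0.add (tendsto_const_nhds (x := (1/2:ℝ)))
    simpa using this
  refine ⟨?_, hxi⟩
  have hz1 : Filter.Tendsto (fun k => ζ (k+1) - 1/2) Filter.atTop (nhds 0) := by
    refine squeeze_zero_norm (a := fun k => |β| * ((|β|^2)^k * |ξ 0 - 1/2|)) ?_ ?_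
    · intro k
      calc ‖ζ (k+1) - 1/2‖ = |f β (ξ k) - 1/2| := by rw [hζ k]; rfl
        _ ≤ |β| * |ξ k - 1/2| := key β _
        _ ≤ |β| * ((|β|^2)^k * |ξ 0 - 1/2|) := mul_le_mul_of_nonneg_left (hC k) hb0
    · simpa using hgeo.const_mul (|β|)
  have hz2 : Filter.Tendsto (fun k => ζ (k+1)) Filter.atTop (nhds (1/2)) := by
    have := hz1.add (tendsto_const_nhds (x := (1/2:ℝ)))
    simpa using this
  exact (Filter.tendsto_add_atTop_iff_nat 1).mp hz2
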